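/- Under the translation action of the group of homotopy classes of equivariant maps f : (Σ_g,c_Σ) → (ℂ*,conj) on real Spin structures via the mod-2 index, the Arf invariant changes by arf(f·q) = arf(q) + q((f_*)^PD), where (f_*)^PD is the Poincaré dual of the mod-2 index class of f; in particular arf(f·q) − arf(q) depends only on f and the first Stiefel-Whitney class of q, not on q itself. -/

import Mathlib

/-!
STATEMENT 10. (Arf change formula.)  `V = H₁(Σ_g, ℤ/2)` with symplectic basis `B`
(`inl i ↦ aᵢ`, `inr i ↦ bᵢ`) and intersection form `ω`; `P = F₊` is the Lagrangian
spanned by the `aᵢ` (the Poincaré dual of `F⁻`, the image of the mod-2 index).  An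
equivariant map `f` acts on a real Spin structure (quadratic refinement) `q` by
translation by `f_* = ω v ·` with `v = (f_*)^PD ∈ F₊`.  Claims:
`arf(f·q) = arf(q) + q((f_*)^PD)`; and if `q'` is another quadratic refinement with
the same first Stiefel–Whitney class (i.e. `q' = q + ω w ·` for some `w ∈ F₊`), then
`arf(f·q) − arf(q) = arf(f·q') − arf(q')`.
-/

open Finset

theorem stmt_10 (V : Type*) [AddCommGroup V] [Module (ZMod 2) V] (g : ℕ)
    (B : Module.Basis (Fin g ⊕ Fin g) (ZMod 2) V)
    (ω : V →ₗ[ZMod 2] V →ₗ[ZMod 2] ZMod 2)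
    (hωaa : ∀ i j, ω (B (Sum.inl i)) (B (Sum.inl j)) = 0)
    (hωbb : ∀ i j, ω (B (Sum.inr i)) (B (Sum.inr j)) = 0)
    (hωab : ∀ i j, ω (B (Sum.inl i)) (B (Sum.inr j)) = if i = j then 1 else 0)
    (P : Submodule (ZMod 2) V)
    (hP : P = Submodule.span (ZMod 2) (Set.range fun i : Fin g => B (Sum.inl i)))
    (hLag : ∀ x ∈ P, ∀ y ∈ P, ω x y = 0) :
    (∀ q : V → ZMod 2, (∀ x y, q (x + y) = q x + q y + ω x y) →
      ∀ v ∈ P,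
        (∑ i : Fin g, (q (B (Sum.inl i)) + ω v (B (Sum.inl i))) *
            (q (B (Sum.inr i)) + ω v (B (Sum.inr i))))
          = (∑ i : Fin g, q (B (Sum.inl i)) * q (B (Sum.inr i))) + q v) ∧
    (∀ q q' : V → ZMod 2,
      (∀ x y, q (x + y) = q x + q y + ω x y) →
      (∀ x y, q' (x + y) = q' x + q' y + ω x y) →
      (∃ w ∈ P, ∀ x, q' x = q x + ω w x) →
      ∀ v ∈ P,
        (∑ i : Fin g, (q (B (Sum.inl i)) + ω v (B (Sum.inl i))) *
            (q (B (Sum.inr i)) + ω v (B (Sum.inr i))))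
          - (∑ i : Fin g, q (B (Sum.inl i)) * q (B (Sum.inr i)))
        = (∑ i : Fin g, (q' (B (Sum.inl i)) + ω v (B (Sum.inl i))) *
            (q' (B (Sum.inr i)) + ω v (B (Sum.inr i))))
          - (∑ i : Fin g, q' (B (Sum.inl i)) * q' (B (Sum.inr i)))) := by
  have haP : ∀ i : Fin g, B (Sum.inl i) ∈ P := by
    intro i; rw [hP]; exact Submodule.subset_span ⟨i, rfl⟩
  -- key lemma: q is linear on P, expressed via pairing with the b_i
  have key : ∀ q : V → ZMod 2, (∀ x y, q (x + y) = q x + q y + ω x y) →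
      ∀ v ∈ P, ∑ i : Fin g, q (B (Sum.inl i)) * ω v (B (Sum.inr i)) = q v := by
    intro q hq v hv
    have hq0 : q 0 = 0 := by
      have h := hq 0 0
      simp only [add_zero, map_zero, LinearMap.zero_apply] at h
      have : q 0 + 0 = q 0 + q 0 := by rw [add_zero]; exact h
      exact (add_left_cancel this).symm
    rw [hP] at hv
    induction hv using Submodule.span_induction with
    | mem x hx =>
      obtain ⟨j, rfl⟩ := hx
      have : ∀ i : Fin g, q (B (Sum.inl i)) * ω (B (Sum.inl j)) (B (Sum.inr i))
          = if i = j then q (B (Sum.inl j)) else 0 := by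
        intro i
        rw [hωab j i]
        by_cases h : i = j
        · subst h; simp
        · simp [h, Ne.symm h]
      simp only [this, Finset.sum_ite_eq' Finset.univ j, Finset.mem_univ, if_true]
    | zero => simp [hq0]
    | add x y hx hy ihx ihy =>
      have hxP : x ∈ P := by rw [hP]; exact hx
      have hyP : y ∈ P := by rw [hP]; exact hy
      have : q (x + y) = q x + q y := by rw [hq x y, hLag x hxP y hyP, add_zero]
      rw [this, ← ihx, ← ihy, ← Finset.sum_add_distrib]
      refine Finset.sum_congr rfl fun i _ => ?_
      simp [map_add, mul_add]
    | smul c x hx ih =>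
      have hc : c = 0 ∨ c = 1 := by fin_cases c; exacts [Or.inl rfl, Or.inr rfl]
      rcases hc with rfl | rfl
      · simp [hq0]
      · simpa using ih
  have first : ∀ q : V → ZMod 2, (∀ x y, q (x + y) = q x + q y + ω x y) →
      ∀ v ∈ P,
        (∑ i : Fin g, (q (B (Sum.inl i)) + ω v (B (Sum.inl i))) *
            (q (B (Sum.inr i)) + ω v (B (Sum.inr i))))
          = (∑ i : Fin g, q (B (Sum.inl i)) * q (B (Sum.inr i))) + q v := by
    intro q hq v hv
    have hva : ∀ i : Fin g, ω v (B (Sum.inl i)) = 0 := fun i => hLag v hv _ (haP i)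
    have : (∑ i : Fin g, (q (B (Sum.inl i)) + ω v (B (Sum.inl i))) *
            (q (B (Sum.inr i)) + ω v (B (Sum.inr i))))
        = ∑ i : Fin g, (q (B (Sum.inl i)) * q (B (Sum.inr i))
            + q (B (Sum.inl i)) * ω v (B (Sum.inr i))) := by
      refine Finset.sum_congr rfl fun i _ => ?_
      rw [hva i, add_zero, mul_add]
    rw [this, Finset.sum_add_distrib, key q hq v hv]
  refine ⟨first, ?_⟩
  intro q q' hq hq' ⟨w, hw, hqw⟩ v hv
  rw [first q hq v hv, first q' hq' v hv, hqw v, hLag w hw v hv, add_zero]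
  ring
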